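/- Let g = so(3,F) +_π F³ be the semidirect product given by the natural action of so(3,F) on F³ (char F ≠ 2,3). A symmetric bilinear form on g whose matrix, with respect to the basis {i, j, k, e₁, e₂, e₃}, has block form [[P, Q],[Qᵀ, 0]] (P symmetric), is cyclic if and only if P and Q are symmetric and tr(P) = tr(Q) = 0. -/

import Mathlib

theorem aux_cyclic_span {F L : Type*} [Field F] [LieRing L] [LieAlgebra F L]
    (b : Module.Basis (Fin 6) F L) (B : L →ₗ[F] L →ₗ[F] F)
    (h : ∀ p q r : Fin 6,
      B ⁅b p, b q⁆ (b r) + B ⁅b q, b r⁆ (b p) + B ⁅b r, b p⁆ (b q) = 0)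
    (x y z : L) : B ⁅x, y⁆ z + B ⁅y, z⁆ x + B ⁅z, x⁆ y = 0 := by
  have hmem : ∀ w : L, w ∈ Submodule.span F (Set.range ⇑b) := by
    intro w; rw [b.span_eq]; trivial
  induction hmem x using Submodule.span_induction generalizing y z with
  | mem u hu =>
    obtain ⟨p, rfl⟩ := hu
    induction hmem y using Submodule.span_induction generalizing z with
    | mem v hv =>
      obtain ⟨q, rfl⟩ := hv
      induction hmem z using Submodule.span_induction with
      | mem w hw => obtain ⟨r, rfl⟩ := hw; exact h p q r
      | zero => simp
      | add w₁ w₂ _ _ h1 h2 =>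
        simp only [lie_add, add_lie, map_add, LinearMap.add_apply] at *
        linear_combination h1 + h2
      | smul a w _ h1 =>
        simp only [lie_smul, smul_lie, map_smul, LinearMap.smul_apply, smul_eq_mul] at *
        linear_combination a * h1
    | zero => simp
    | add v₁ v₂ _ _ h1 h2 =>
      simp only [lie_add, add_lie, map_add, LinearMap.add_apply]
      linear_combination h1 z + h2 z
    | smul a v _ h1 =>
      simp only [lie_smul, smul_lie, map_smul, LinearMap.smul_apply, smul_eq_mul]
      linear_combination a * h1 z
  | zero => simp
  | add u₁ u₂ _ _ h1 h2 =>
    simp only [lie_add, add_lie, map_add, LinearMap.add_apply]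
    linear_combination h1 y z + h2 y z
  | smul a u _ h1 =>
    simp only [lie_smul, smul_lie, map_smul, LinearMap.smul_apply, smul_eq_mul]
    linear_combination a * h1 y z

set_option maxHeartbeats 1600000 in
/-- For g = so(3,F) +_π F³ (basis i, j, k, e₁, e₂, e₃ with the listed
brackets), a symmetric bilinear form whose matrix has block form [[P,Q],[Qᵀ,0]]
(i.e. B(e_a, e_b) = 0) is cyclic iff P and Q are symmetric and tr P = tr Q = 0. -/
theorem so3_semidirect_cyclic_iff
    {F L : Type*} [Field F] [LieRing L] [LieAlgebra F L]
    (hchar2 : ringChar F ≠ 2) (hchar3 : ringChar F ≠ 3)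
    (I J K E₁ E₂ E₃ : L) (b : Module.Basis (Fin 6) F L)
    (hb : ⇑b = ![I, J, K, E₁, E₂, E₃])
    (hIJ : ⁅I, J⁆ = K) (hJK : ⁅J, K⁆ = I) (hKI : ⁅K, I⁆ = J)
    (hIE₁ : ⁅I, E₁⁆ = 0) (hIE₂ : ⁅I, E₂⁆ = E₃) (hIE₃ : ⁅I, E₃⁆ = -E₂)
    (hJE₁ : ⁅J, E₁⁆ = -E₃) (hJE₂ : ⁅J, E₂⁆ = 0) (hJE₃ : ⁅J, E₃⁆ = E₁)
    (hKE₁ : ⁅K, E₁⁆ = E₂) (hKE₂ : ⁅K, E₂⁆ = -E₁) (hKE₃ : ⁅K, E₃⁆ = 0)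
    (hEE : ∀ a c : Fin 3, ⁅![E₁, E₂, E₃] a, ![E₁, E₂, E₃] c⁆ = 0)
    (B : L →ₗ[F] L →ₗ[F] F)
    (hsymm : ∀ x y : L, B x y = B y x)
    (hblock : ∀ a c : Fin 3, B (![E₁, E₂, E₃] a) (![E₁, E₂, E₃] c) = 0) :
    (∀ x y z : L, B ⁅x, y⁆ z + B ⁅y, z⁆ x + B ⁅z, x⁆ y = 0) ↔
      ((Matrix.of fun a c => B (![I, J, K] a) (![I, J, K] c) :
          Matrix (Fin 3) (Fin 3) F).IsSymm ∧
       (Matrix.of fun a c => B (![I, J, K] a) (![E₁, E₂, E₃] c) :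
          Matrix (Fin 3) (Fin 3) F).IsSymm ∧
       (Matrix.of fun a c => B (![I, J, K] a) (![I, J, K] c) :
          Matrix (Fin 3) (Fin 3) F).trace = 0 ∧
       (Matrix.of fun a c => B (![I, J, K] a) (![E₁, E₂, E₃] c) :
          Matrix (Fin 3) (Fin 3) F).trace = 0) := by
  -- reversed brackets
  have hJI : ⁅J, I⁆ = -K := by rw [← lie_skew, hIJ]
  have hKJ : ⁅K, J⁆ = -I := by rw [← lie_skew, hJK]
  have hIK : ⁅I, K⁆ = -J := by rw [← lie_skew, hKI]
  have hE₁I : ⁅E₁, I⁆ = 0 := by rw [← lie_skew, hIE₁, neg_zero]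
  have hE₂I : ⁅E₂, I⁆ = -E₃ := by rw [← lie_skew, hIE₂]
  have hE₃I : ⁅E₃, I⁆ = E₂ := by rw [← lie_skew, hIE₃, neg_neg]
  have hE₁J : ⁅E₁, J⁆ = E₃ := by rw [← lie_skew, hJE₁, neg_neg]
  have hE₂J : ⁅E₂, J⁆ = 0 := by rw [← lie_skew, hJE₂, neg_zero]
  have hE₃J : ⁅E₃, J⁆ = -E₁ := by rw [← lie_skew, hJE₃]
  have hE₁K : ⁅E₁, K⁆ = -E₂ := by rw [← lie_skew, hKE₁]
  have hE₂K : ⁅E₂, K⁆ = E₁ := by rw [← lie_skew, hKE₂, neg_neg]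
  have hE₃K : ⁅E₃, K⁆ = 0 := by rw [← lie_skew, hKE₃, neg_zero]
  have hE12 : ⁅E₁, E₂⁆ = 0 := hEE 0 1
  have hE13 : ⁅E₁, E₃⁆ = 0 := hEE 0 2
  have hE21 : ⁅E₂, E₁⁆ = 0 := hEE 1 0
  have hE23 : ⁅E₂, E₃⁆ = 0 := hEE 1 2
  have hE31 : ⁅E₃, E₁⁆ = 0 := hEE 2 0
  have hE32 : ⁅E₃, E₂⁆ = 0 := hEE 2 1
  have hB11 : B E₁ E₁ = 0 := hblock 0 0
  have hB12 : B E₁ E₂ = 0 := hblock 0 1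
  have hB13 : B E₁ E₃ = 0 := hblock 0 2
  have hB21 : B E₂ E₁ = 0 := hblock 1 0
  have hB22 : B E₂ E₂ = 0 := hblock 1 1
  have hB23 : B E₂ E₃ = 0 := hblock 1 2
  have hB31 : B E₃ E₁ = 0 := hblock 2 0
  have hB32 : B E₃ E₂ = 0 := hblock 2 1
  have hB33 : B E₃ E₃ = 0 := hblock 2 2
  -- orientation lemmas for B
  have sJI : B J I = B I J := hsymm J I
  have sKI : B K I = B I K := hsymm K I
  have sKJ : B K J = B J K := hsymm K J
  have sE₁I : B E₁ I = B I E₁ := hsymm E₁ I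
  have sE₂I : B E₂ I = B I E₂ := hsymm E₂ I
  have sE₃I : B E₃ I = B I E₃ := hsymm E₃ I
  have sE₁J : B E₁ J = B J E₁ := hsymm E₁ J
  have sE₂J : B E₂ J = B J E₂ := hsymm E₂ J
  have sE₃J : B E₃ J = B J E₃ := hsymm E₃ J
  have sE₁K : B E₁ K = B K E₁ := hsymm E₁ K
  have sE₂K : B E₂ K = B K E₂ := hsymm E₂ K
  have sE₃K : B E₃ K = B K E₃ := hsymm E₃ K
  constructor
  · intro hcyc
    have c1 := hcyc I J K
    have c2 := hcyc I J E₁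
    have c3 := hcyc J K E₂
    have c4 := hcyc K I E₃
    have c5 := hcyc I J E₃
    simp only [hIJ, hJK, hKI, hJI, hKJ, hIK, hIE₁, hIE₂, hIE₃, hJE₁, hJE₂, hJE₃,
      hKE₁, hKE₂, hKE₃, hE₁I, hE₂I, hE₃I, hE₁J, hE₂J, hE₃J, hE₁K, hE₂K, hE₃K,
      map_neg, LinearMap.neg_apply, map_zero, LinearMap.zero_apply,
      add_zero, zero_add, sE₁I, sE₂I, sE₃I, sE₁J, sE₂J, sE₃J, sE₁K, sE₂K, sE₃K]
      at c1 c2 c3 c4 c5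
    refine ⟨?_, ?_, ?_, ?_⟩
    · rw [Matrix.IsSymm.ext_iff]
      intro i j
      simp only [Matrix.of_apply]
      exact hsymm _ _
    · rw [Matrix.IsSymm.ext_iff]
      intro i j
      fin_cases i <;> fin_cases j <;>
        simp only [Matrix.of_apply, Matrix.cons_val_zero, Matrix.cons_val_one,
          Matrix.head_cons, Matrix.cons_val_two, Matrix.tail_cons,
          Fin.mk_zero, Fin.mk_one, Fin.reduceFinMk] <;>
        first
          | rfl
          | linear_combination c2
          | linear_combination -c2
          | linear_combination c3
          | linear_combination -c3
          | linear_combination c4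
          | linear_combination -c4
    · simp only [Matrix.trace, Matrix.diag, Matrix.of_apply, Fin.sum_univ_three,
        Matrix.cons_val_zero, Matrix.cons_val_one, Matrix.head_cons,
        Matrix.cons_val_two, Matrix.tail_cons]
      linear_combination c1
    · simp only [Matrix.trace, Matrix.diag, Matrix.of_apply, Fin.sum_univ_three,
        Matrix.cons_val_zero, Matrix.cons_val_one, Matrix.head_cons,
        Matrix.cons_val_two, Matrix.tail_cons]
      linear_combination c5
  · rintro ⟨_, hQ, htP, htQ⟩
    have e01 : B J E₁ = B I E₂ := by
      have := hQ.apply 0 1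
      simpa only [Matrix.of_apply, Matrix.cons_val_zero, Matrix.cons_val_one,
        Matrix.head_cons] using this
    have e02 : B K E₁ = B I E₃ := by
      have := hQ.apply 0 2
      simpa only [Matrix.of_apply, Matrix.cons_val_zero, Matrix.cons_val_one,
        Matrix.head_cons, Matrix.cons_val_two, Matrix.tail_cons] using this
    have e12 : B K E₂ = B J E₃ := by
      have := hQ.apply 1 2
      simpa only [Matrix.of_apply, Matrix.cons_val_zero, Matrix.cons_val_one,
        Matrix.head_cons, Matrix.cons_val_two, Matrix.tail_cons] using this
    have tP : B I I + B J J + B K K = 0 := by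
      simpa only [Matrix.trace, Matrix.diag, Matrix.of_apply, Fin.sum_univ_three,
        Matrix.cons_val_zero, Matrix.cons_val_one, Matrix.head_cons,
        Matrix.cons_val_two, Matrix.tail_cons] using htP
    have tQ : B I E₁ + B J E₂ + B K E₃ = 0 := by
      simpa only [Matrix.trace, Matrix.diag, Matrix.of_apply, Fin.sum_univ_three,
        Matrix.cons_val_zero, Matrix.cons_val_one, Matrix.head_cons,
        Matrix.cons_val_two, Matrix.tail_cons] using htQ
    have hv5 : (![I, J, K, E₁, E₂, E₃] : Fin 6 → L) 5 = E₃ := rfl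
    have key : ∀ p q r : Fin 6,
        B ⁅b p, b q⁆ (b r) + B ⁅b q, b r⁆ (b p) + B ⁅b r, b p⁆ (b q) = 0 := by
      intro p q r
      simp only [hb]
      fin_cases p <;> fin_cases q <;> fin_cases r <;>
        simp only [Matrix.cons_val_zero, Matrix.cons_val_one, Matrix.head_cons,
          Matrix.cons_val_two, Matrix.cons_val_three, Matrix.cons_val_four,
          Matrix.tail_cons, Matrix.cons_val_succ, Fin.isValue, Fin.mk_zero, Fin.mk_one, Fin.reduceFinMk, hv5,
          hIJ, hJK, hKI, hJI, hKJ, hIK, hIE₁, hIE₂, hIE₃, hJE₁, hJE₂, hJE₃,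
          hKE₁, hKE₂, hKE₃, hE₁I, hE₂I, hE₃I, hE₁J, hE₂J, hE₃J, hE₁K, hE₂K, hE₃K,
          hE12, hE13, hE21, hE23, hE31, hE32, lie_self,
          map_neg, LinearMap.neg_apply, map_zero, LinearMap.zero_apply,
          hB11, hB12, hB13, hB21, hB22, hB23, hB31, hB32, hB33,
          sJI, sKI, sKJ, sE₁I, sE₂I, sE₃I, sE₁J, sE₂J, sE₃J, sE₁K, sE₂K, sE₃K,
          add_zero, zero_add, neg_neg, neg_zero] <;>
        first
          | rfl
          | ring1
          | linear_combination tP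
          | linear_combination -tP
          | linear_combination tQ
          | linear_combination -tQ
          | linear_combination e01
          | linear_combination -e01
          | linear_combination e02
          | linear_combination -e02
          | linear_combination e12
          | linear_combination -e12
    exact fun x y z => aux_cyclic_span b B key x y z
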